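/- Let G₁ be r₁-regular with r₁ ≥ 2, having p₁ vertices and q₁ edges, and let G₂ be r₂-regular with p₂ vertices. Then 4 is an eigenvalue of the eccentricity matrix of the subdivision-vertex join G₁ ∨̇ G₂ with multiplicity at least q₁ − p₁. -/

import Mathlib

open SimpleGraph Matrix Finset

attribute [local instance] Fintype.ofFinite Classical.propDecidable

noncomputable section

/-- Eccentricity of a vertex: maximum distance to any vertex. -/
def ecc {V : Type*} [Fintype V] (G : SimpleGraph V) (v : V) : ℕ :=
  Finset.univ.sup (fun w => G.dist v w)

/-- Diameter: maximum eccentricity. -/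
def gdiam {V : Type*} [Fintype V] (G : SimpleGraph V) : ℕ :=
  Finset.univ.sup (fun v => ecc G v)

/-- The eccentricity matrix. -/
def eccMatrix {V : Type*} [Fintype V] (G : SimpleGraph V) : Matrix V V ℝ :=
  fun u v => if G.dist u v = min (ecc G u) (ecc G v) then (G.dist u v : ℝ) else 0

/-- Join of two graphs. -/
def joinGraph {V₁ V₂ : Type*} (G₁ : SimpleGraph V₁) (G₂ : SimpleGraph V₂) :
    SimpleGraph (V₁ ⊕ V₂) :=
  SimpleGraph.fromRel (fun x y =>
    match x, y with
    | Sum.inl a, Sum.inl b => G₁.Adj a b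
    | Sum.inr a, Sum.inr b => G₂.Adj a b
    | Sum.inl _, Sum.inr _ => True
    | Sum.inr _, Sum.inl _ => False)

/-- Disjoint union of two graphs. -/
def disjUnion {V₁ V₂ : Type*} (G₁ : SimpleGraph V₁) (G₂ : SimpleGraph V₂) :
    SimpleGraph (V₁ ⊕ V₂) :=
  SimpleGraph.fromRel (fun x y =>
    match x, y with
    | Sum.inl a, Sum.inl b => G₁.Adj a b
    | Sum.inr a, Sum.inr b => G₂.Adj a b
    | _, _ => False)

/-- Subdivision-vertex join `G₁ ∨̇ G₂`: take the subdivision of `G₁` (original vertices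
`V₁`, one new vertex for every edge) and join every original vertex of `G₁` to every
vertex of `G₂`. -/
def subVertexJoin {V₁ V₂ : Type*} (G₁ : SimpleGraph V₁) (G₂ : SimpleGraph V₂) :
    SimpleGraph ((V₁ ⊕ G₁.edgeSet) ⊕ V₂) :=
  SimpleGraph.fromRel (fun x y =>
    match x, y with
    | Sum.inl (Sum.inl v), Sum.inl (Sum.inr e) => v ∈ (e : Sym2 V₁)
    | Sum.inl (Sum.inl _), Sum.inr _ => True
    | Sum.inr a, Sum.inr b => G₂.Adj a b
    | _, _ => False)

/-- Subdivision-edge join `G₁ ⊻ G₂`: take the subdivision of `G₁` and join every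
subdivision (inserted) vertex of `G₁` to every vertex of `G₂`. -/
def subEdgeJoin {V₁ V₂ : Type*} (G₁ : SimpleGraph V₁) (G₂ : SimpleGraph V₂) :
    SimpleGraph ((V₁ ⊕ G₁.edgeSet) ⊕ V₂) :=
  SimpleGraph.fromRel (fun x y =>
    match x, y with
    | Sum.inl (Sum.inl v), Sum.inl (Sum.inr e) => v ∈ (e : Sym2 V₁)
    | Sum.inl (Sum.inr _), Sum.inr _ => True
    | Sum.inr a, Sum.inr b => G₂.Adj a b
    | _, _ => False)

/-- Line graph: vertices are edges of `G`, adjacent iff they share an endpoint. -/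
def lineG {V : Type*} (G : SimpleGraph V) : SimpleGraph G.edgeSet :=
  SimpleGraph.fromRel (fun e f => ∃ v, v ∈ (e : Sym2 V) ∧ v ∈ (f : Sym2 V))

/-- Incidence matrix of a graph. -/
def incMat {V : Type*} [Fintype V] (G : SimpleGraph V) : Matrix V G.edgeSet ℝ :=
  fun v e => if v ∈ (e : Sym2 V) then 1 else 0

/-- All-ones matrix. -/
def Jmat (m n : Type*) : Matrix m n ℝ := Matrix.of (fun _ _ => (1 : ℝ))

/-- A symmetric matrix is irreducible iff it is not permutation-similar to a
nontrivial block upper-triangular matrix, i.e. there is no nontrivial vertex split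
with all cross entries zero. -/
def MatIrreducible {n : Type*} (M : Matrix n n ℝ) : Prop :=
  ∀ S : Set n, S.Nonempty → Sᶜ.Nonempty → ∃ u ∈ S, ∃ v ∈ Sᶜ, M u v ≠ 0

/-- `μ` is an eigenvalue of `M`. -/
def IsEigenvalue {n : Type*} [Fintype n] (M : Matrix n n ℝ) (μ : ℝ) : Prop :=
  ∃ v : n → ℝ, v ≠ 0 ∧ M.mulVec v = μ • v

/-- Eigenspace of `M` for `μ`. -/
def eigSpace {n : Type*} [Fintype n] (M : Matrix n n ℝ) (μ : ℝ) :
    Submodule ℝ (n → ℝ) :=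
  LinearMap.ker (M.mulVecLin - μ • LinearMap.id)

/-- Eccentricity energy: sum of absolute values of the eccentricity eigenvalues. -/
def eccEnergy {V : Type*} [Fintype V] (G : SimpleGraph V) : ℝ :=
  ((eccMatrix G).charpoly.roots.map (fun x => |x|)).sum

/-- Eccentricity Wiener index: half the sum of the entries of the eccentricity matrix. -/
def eccWiener {V : Type*} [Fintype V] (G : SimpleGraph V) : ℝ :=
  (∑ u, ∑ v, eccMatrix G u v) / 2

end

section AuxStmt7
set_option linter.unusedSectionVars false

open Sum

variable {V₁ V₂ : Type*} [Fintype V₁] [Fintype V₂] {G₁ : SimpleGraph V₁} {G₂ : SimpleGraph V₂}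

private lemma walk_lip {T : Type*} {G : SimpleGraph T} (φ : T → ℕ)
    (hφ : ∀ x y, G.Adj x y → φ y ≤ φ x + 1) :
    ∀ {u v : T} (p : G.Walk u v), φ v ≤ φ u + p.length := by
  intro u v p
  induction p with
  | nil => simp
  | cons h q ih =>
      have := hφ _ _ h
      simp only [SimpleGraph.Walk.length_cons]
      omega

private lemma dist_eq_of {T : Type*} {G : SimpleGraph T} {u v : T} (p : G.Walk u v) (k : ℕ)
    (hp : p.length = k) (φ : T → ℕ) (hφ : ∀ x y, G.Adj x y → φ y ≤ φ x + 1)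
    (hu : φ u = 0) (hv : φ v = k) : G.dist u v = k := by
  have h1 := SimpleGraph.dist_le p
  obtain ⟨q, hq⟩ := p.reachable.exists_walk_length_eq_dist
  have h2 := walk_lip φ hφ q
  omega

private lemma adj_uu (u u' : V₁) :
    ¬ (subVertexJoin G₁ G₂).Adj (inl (inl u)) (inl (inl u')) := by
  simp [subVertexJoin]

private lemma adj_ue (u : V₁) (e : G₁.edgeSet) :
    (subVertexJoin G₁ G₂).Adj (inl (inl u)) (inl (inr e)) ↔ u ∈ (e : Sym2 V₁) := by
  simp [subVertexJoin]

private lemma adj_eu (u : V₁) (e : G₁.edgeSet) :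
    (subVertexJoin G₁ G₂).Adj (inl (inr e)) (inl (inl u)) ↔ u ∈ (e : Sym2 V₁) := by
  simp [subVertexJoin]

private lemma adj_uw (u : V₁) (w : V₂) :
    (subVertexJoin G₁ G₂).Adj (inl (inl u)) (inr w) := by
  simp [subVertexJoin]

private lemma adj_wu (u : V₁) (w : V₂) :
    (subVertexJoin G₁ G₂).Adj (inr w) (inl (inl u)) := by
  simp [subVertexJoin]

private lemma adj_ee (e f : G₁.edgeSet) :
    ¬ (subVertexJoin G₁ G₂).Adj (inl (inr e)) (inl (inr f)) := by
  simp [subVertexJoin]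

private lemma adj_ew (e : G₁.edgeSet) (w : V₂) :
    ¬ (subVertexJoin G₁ G₂).Adj (inl (inr e)) (inr w) := by
  simp [subVertexJoin]

private lemma adj_we (e : G₁.edgeSet) (w : V₂) :
    ¬ (subVertexJoin G₁ G₂).Adj (inr w) (inl (inr e)) := by
  simp [subVertexJoin]

private lemma adj_ww (w w' : V₂) :
    (subVertexJoin G₁ G₂).Adj (inr w) (inr w') ↔ G₂.Adj w w' := by
  constructor
  · intro h
    rcases (SimpleGraph.fromRel_adj _ _ _).mp h with ⟨_, h | h⟩
    · exact h
    · exact (show G₂.Adj w' w from h).symm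
  · intro h
    exact (SimpleGraph.fromRel_adj _ _ _).mpr ⟨by simpa using h.ne, Or.inl h⟩

private lemma edge_rep (e : G₁.edgeSet) : ∃ a b : V₁, G₁.Adj a b ∧ (e : Sym2 V₁) = s(a, b) := by
  obtain ⟨z, hz⟩ := e
  induction z using Sym2.ind with
  | _ a b => exact ⟨a, b, (SimpleGraph.mem_edgeSet G₁).mp hz, rfl⟩


private lemma dist_ue {u : V₁} {e : G₁.edgeSet} (h : u ∈ (e : Sym2 V₁)) :
    (subVertexJoin G₁ G₂).dist (inl (inl u)) (inl (inr e)) = 1 :=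
  dist_eq_of (SimpleGraph.Walk.cons ((adj_ue u e).mpr h) SimpleGraph.Walk.nil) 1 (by simp)
    (fun x => if x = inl (inl u) then 0 else 1)
    (fun x y _ => by split_ifs <;> omega) (by simp) (by simp)

private lemma dist_ue_not (w : V₂) {u : V₁} {e : G₁.edgeSet} (h : u ∉ (e : Sym2 V₁)) :
    (subVertexJoin G₁ G₂).dist (inl (inl u)) (inl (inr e)) = 3 := by
  obtain ⟨a, b, hab, he⟩ := edge_rep e
  have ha : a ∈ (e : Sym2 V₁) := by rw [he]; exact Sym2.mem_mk_left a b
  refine dist_eq_of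
    (SimpleGraph.Walk.cons (adj_uw u w) (SimpleGraph.Walk.cons (adj_wu a w)
      (SimpleGraph.Walk.cons ((adj_ue a e).mpr ha) SimpleGraph.Walk.nil))) 3 (by simp)
    (Sum.elim (Sum.elim (fun u' => if u' = u then 0 else 2)
      (fun f' => if u ∈ (f' : Sym2 V₁) then 1 else 3)) (fun _ => 1))
    ?_ (by simp) (by simp [h])
  intro x y hxy
  rcases x with (x|x)|x <;> rcases y with (y|y)|y
  · exact absurd hxy (adj_uu _ _)
  · have hm := (adj_ue x y).mp hxy
    by_cases hx : x = u
    · subst hx; simp [hm]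
    · simp only [Sum.elim_inl, Sum.elim_inr, if_neg hx]; split_ifs <;> omega
  · simp
  · have hm := (adj_eu y x).mp hxy
    by_cases hy : y = u
    · subst hy; simp [hm]
    · simp only [Sum.elim_inl, Sum.elim_inr, if_neg hy]; split_ifs <;> omega
  · exact absurd hxy (adj_ee _ _)
  · exact absurd hxy (adj_ew _ _)
  · simp only [Sum.elim_inl, Sum.elim_inr]; split_ifs <;> omega
  · exact absurd hxy (adj_we _ _)
  · simp

private lemma dist_wf (w : V₂) (f : G₁.edgeSet) :
    (subVertexJoin G₁ G₂).dist (inr w) (inl (inr f)) = 2 := by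
  obtain ⟨a, b, hab, hf⟩ := edge_rep f
  have ha : a ∈ (f : Sym2 V₁) := by rw [hf]; exact Sym2.mem_mk_left a b
  refine dist_eq_of
    (SimpleGraph.Walk.cons (adj_wu a w) (SimpleGraph.Walk.cons ((adj_ue a f).mpr ha)
      SimpleGraph.Walk.nil)) 2 (by simp)
    (Sum.elim (Sum.elim (fun _ => 1) (fun _ => 2)) (fun w' => if w' = w then 0 else 1))
    ?_ (by simp) (by simp)
  intro x y hxy
  rcases x with (x|x)|x <;> rcases y with (y|y)|y <;>
    first
      | exact absurd hxy (adj_uu _ _)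
      | exact absurd hxy (adj_ee _ _)
      | exact absurd hxy (adj_ew _ _)
      | exact absurd hxy (adj_we _ _)
      | (simp only [Sum.elim_inl, Sum.elim_inr]; (try split_ifs) <;> omega)

private lemma dist_ef_share {e f : G₁.edgeSet} (hef : e ≠ f) {a : V₁}
    (hae : a ∈ (e : Sym2 V₁)) (haf : a ∈ (f : Sym2 V₁)) :
    (subVertexJoin G₁ G₂).dist (inl (inr e)) (inl (inr f)) = 2 := by
  refine dist_eq_of
    (SimpleGraph.Walk.cons ((adj_eu a e).mpr hae) (SimpleGraph.Walk.cons ((adj_ue a f).mpr haf)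
      SimpleGraph.Walk.nil)) 2 (by simp)
    (Sum.elim (Sum.elim (fun _ => 1) (fun f' => if f' = e then 0 else 2)) (fun _ => 2))
    ?_ (by simp) (by simp [hef.symm])
  intro x y hxy
  rcases x with (x|x)|x <;> rcases y with (y|y)|y <;>
    first
      | exact absurd hxy (adj_uu _ _)
      | exact absurd hxy (adj_ee _ _)
      | exact absurd hxy (adj_ew _ _)
      | exact absurd hxy (adj_we _ _)
      | (simp only [Sum.elim_inl, Sum.elim_inr]; (try split_ifs) <;> omega)

private lemma dist_ef_disj (w : V₂) {e f : G₁.edgeSet}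
    (hd : ∀ v : V₁, ¬(v ∈ (e : Sym2 V₁) ∧ v ∈ (f : Sym2 V₁))) :
    (subVertexJoin G₁ G₂).dist (inl (inr e)) (inl (inr f)) = 4 := by
  obtain ⟨a, b, hab, he⟩ := edge_rep e
  obtain ⟨c, d, hcd, hf⟩ := edge_rep f
  have ha : a ∈ (e : Sym2 V₁) := by rw [he]; exact Sym2.mem_mk_left a b
  have hc : c ∈ (f : Sym2 V₁) := by rw [hf]; exact Sym2.mem_mk_left c d
  have hef : f ≠ e := fun h => hd c ⟨h ▸ hc, hc⟩
  refine dist_eq_of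
    (SimpleGraph.Walk.cons ((adj_eu a e).mpr ha) (SimpleGraph.Walk.cons (adj_uw a w)
      (SimpleGraph.Walk.cons (adj_wu c w) (SimpleGraph.Walk.cons ((adj_ue c f).mpr hc)
        SimpleGraph.Walk.nil)))) 4 (by simp)
    (Sum.elim (Sum.elim (fun v => if v ∈ (e : Sym2 V₁) then 1 else 3)
      (fun f' => if f' = e then 0 else
        if ∃ v : V₁, v ∈ (e : Sym2 V₁) ∧ v ∈ (f' : Sym2 V₁) then 2 else 4)) (fun _ => 2))
    ?_ (by simp) ?_
  · intro x y hxy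
    rcases x with (x|x)|x <;> rcases y with (y|y)|y
    · exact absurd hxy (adj_uu _ _)
    · have hm := (adj_ue x y).mp hxy
      by_cases hx : x ∈ (e : Sym2 V₁)
      · by_cases hy : y = e
        · simp [hx, hy]
        · have hsh : ∃ v : V₁, v ∈ (e : Sym2 V₁) ∧ v ∈ (y : Sym2 V₁) := ⟨x, hx, hm⟩
          simp [hx, hy, hsh]
      · by_cases hy : y = e
        · exact (hx (hy ▸ hm)).elim
        · simp only [Sum.elim_inl, Sum.elim_inr, if_neg hx, if_neg hy]
          split_ifs <;> omega
    · simp only [Sum.elim_inl, Sum.elim_inr]; split_ifs <;> omega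
    · have hm := (adj_eu y x).mp hxy
      by_cases hy : y ∈ (e : Sym2 V₁)
      · simp only [Sum.elim_inl, Sum.elim_inr, if_pos hy]; split_ifs <;> omega
      · have hxe : x ≠ e := fun h => hy (h ▸ hm)
        simp only [Sum.elim_inl, Sum.elim_inr, if_neg hy, if_neg hxe]
        split_ifs <;> omega
    · exact absurd hxy (adj_ee _ _)
    · exact absurd hxy (adj_ew _ _)
    · simp only [Sum.elim_inl, Sum.elim_inr]; split_ifs <;> omega
    · exact absurd hxy (adj_we _ _)
    · simp
  · simp only [Sum.elim_inl, Sum.elim_inr, if_neg hef]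
    rw [if_neg]
    push_neg at hd ⊢
    intro v hv; exact hd v hv

private lemma exists_nonincident {r : ℕ} (hr : G₁.IsRegularOfDegree r) (h2 : 2 ≤ r) (u : V₁) :
    ∃ f : G₁.edgeSet, u ∉ (f : Sym2 V₁) := by
  have hne : (G₁.neighborFinset u).Nonempty := by
    rw [← Finset.card_pos, SimpleGraph.IsRegularOfDegree] at *
    have := hr u
    rw [SimpleGraph.degree] at this
    omega
  obtain ⟨a, ha⟩ := hne
  have hua : G₁.Adj u a := (SimpleGraph.mem_neighborFinset _ _ _).mp ha
  have hcard : 1 < (G₁.neighborFinset a).card := by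
    have := hr a; rw [SimpleGraph.degree] at this; omega
  obtain ⟨b, hb, hbu⟩ := Finset.exists_mem_ne hcard u
  have hab : G₁.Adj a b := (SimpleGraph.mem_neighborFinset _ _ _).mp hb
  refine ⟨⟨s(a, b), (SimpleGraph.mem_edgeSet G₁).mpr hab⟩, ?_⟩
  simp only [Sym2.mem_iff]
  push_neg
  exact ⟨hua.ne, fun h => hbu h.symm⟩

private lemma exists_nonmem {r : ℕ} (hr : G₁.IsRegularOfDegree r) (h2 : 2 ≤ r)
    (f : G₁.edgeSet) : ∃ u : V₁, u ∉ (f : Sym2 V₁) := by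
  obtain ⟨a, b, hab, hf⟩ := edge_rep f
  have hcard : 1 < (G₁.neighborFinset a).card := by
    have := hr a; rw [SimpleGraph.degree] at this; omega
  obtain ⟨c, hc, hcb⟩ := Finset.exists_mem_ne hcard b
  have hac : G₁.Adj a c := (SimpleGraph.mem_neighborFinset _ _ _).mp hc
  refine ⟨c, ?_⟩
  rw [hf]
  simp only [Sym2.mem_iff]
  push_neg
  exact ⟨hac.ne', hcb⟩

-- upper bounds via explicit walks
private lemma ub_uu (w : V₂) (u u' : V₁) :
    (subVertexJoin G₁ G₂).dist (inl (inl u)) (inl (inl u')) ≤ 2 := by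
  have := SimpleGraph.dist_le (G := subVertexJoin G₁ G₂)
    (SimpleGraph.Walk.cons (adj_uw u w) (SimpleGraph.Walk.cons (adj_wu u' w)
      SimpleGraph.Walk.nil))
  simpa using this

private lemma ub_ue (w : V₂) (u : V₁) (f : G₁.edgeSet) :
    (subVertexJoin G₁ G₂).dist (inl (inl u)) (inl (inr f)) ≤ 3 := by
  obtain ⟨a, b, hab, hf⟩ := edge_rep f
  have ha : a ∈ (f : Sym2 V₁) := by rw [hf]; exact Sym2.mem_mk_left a b
  have := SimpleGraph.dist_le (G := subVertexJoin G₁ G₂)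
    (SimpleGraph.Walk.cons (adj_uw u w) (SimpleGraph.Walk.cons (adj_wu a w)
      (SimpleGraph.Walk.cons ((adj_ue a f).mpr ha) SimpleGraph.Walk.nil)))
  simpa using this

private lemma ub_uw (u : V₁) (w : V₂) :
    (subVertexJoin G₁ G₂).dist (inl (inl u)) (inr w) ≤ 1 := by
  have := SimpleGraph.dist_le (G := subVertexJoin G₁ G₂) (SimpleGraph.Walk.cons (adj_uw u w) SimpleGraph.Walk.nil)
  simpa using this

private lemma ub_eu (w : V₂) (e : G₁.edgeSet) (u : V₁) :
    (subVertexJoin G₁ G₂).dist (inl (inr e)) (inl (inl u)) ≤ 3 := by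
  obtain ⟨a, b, hab, he⟩ := edge_rep e
  have ha : a ∈ (e : Sym2 V₁) := by rw [he]; exact Sym2.mem_mk_left a b
  have := SimpleGraph.dist_le (G := subVertexJoin G₁ G₂)
    (SimpleGraph.Walk.cons ((adj_eu a e).mpr ha) (SimpleGraph.Walk.cons (adj_uw a w)
      (SimpleGraph.Walk.cons (adj_wu u w) SimpleGraph.Walk.nil)))
  simpa using this

private lemma ub_ef (w : V₂) (e f : G₁.edgeSet) :
    (subVertexJoin G₁ G₂).dist (inl (inr e)) (inl (inr f)) ≤ 4 := by
  obtain ⟨a, b, hab, he⟩ := edge_rep e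
  obtain ⟨c, d, hcd, hf⟩ := edge_rep f
  have ha : a ∈ (e : Sym2 V₁) := by rw [he]; exact Sym2.mem_mk_left a b
  have hc : c ∈ (f : Sym2 V₁) := by rw [hf]; exact Sym2.mem_mk_left c d
  have := SimpleGraph.dist_le (G := subVertexJoin G₁ G₂)
    (SimpleGraph.Walk.cons ((adj_eu a e).mpr ha) (SimpleGraph.Walk.cons (adj_uw a w)
      (SimpleGraph.Walk.cons (adj_wu c w) (SimpleGraph.Walk.cons ((adj_ue c f).mpr hc)
        SimpleGraph.Walk.nil))))
  simpa using this

private lemma ub_ew (w w' : V₂) (e : G₁.edgeSet) :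
    (subVertexJoin G₁ G₂).dist (inl (inr e)) (inr w') ≤ 2 := by
  obtain ⟨a, b, hab, he⟩ := edge_rep e
  have ha : a ∈ (e : Sym2 V₁) := by rw [he]; exact Sym2.mem_mk_left a b
  have := SimpleGraph.dist_le (G := subVertexJoin G₁ G₂)
    (SimpleGraph.Walk.cons ((adj_eu a e).mpr ha) (SimpleGraph.Walk.cons (adj_uw a w')
      SimpleGraph.Walk.nil))
  simpa using this

private lemma ub_wu (w : V₂) (u : V₁) :
    (subVertexJoin G₁ G₂).dist (inr w) (inl (inl u)) ≤ 1 := by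
  have := SimpleGraph.dist_le (G := subVertexJoin G₁ G₂) (SimpleGraph.Walk.cons (adj_wu u w) SimpleGraph.Walk.nil)
  simpa using this

private lemma ub_ww (u : V₁) (w w' : V₂) :
    (subVertexJoin G₁ G₂).dist (inr w) (inr w') ≤ 2 := by
  have := SimpleGraph.dist_le (G := subVertexJoin G₁ G₂)
    (SimpleGraph.Walk.cons (adj_wu u w) (SimpleGraph.Walk.cons (adj_uw u w')
      SimpleGraph.Walk.nil))
  simpa using this

-- eccentricities
private lemma ecc_u {r : ℕ} (hr : G₁.IsRegularOfDegree r) (h2 : 2 ≤ r) (w₀ : V₂) (u : V₁) :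
    ecc (subVertexJoin G₁ G₂) (inl (inl u)) = 3 := by
  apply le_antisymm
  · apply Finset.sup_le
    intro y _
    rcases y with (y|y)|y
    · exact (ub_uu w₀ u y).trans (by omega)
    · exact ub_ue w₀ u y
    · exact (ub_uw u y).trans (by omega)
  · obtain ⟨f, hf⟩ := exists_nonincident hr h2 u
    have h3 : (subVertexJoin G₁ G₂).dist (inl (inl u)) (inl (inr f)) ≤
        ecc (subVertexJoin G₁ G₂) (inl (inl u)) :=
      Finset.le_sup (Finset.mem_univ _)
    rw [dist_ue_not w₀ hf] at h3
    exact h3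

private lemma ecc_w {r : ℕ} (hr : G₁.IsRegularOfDegree r) (h2 : 2 ≤ r) (u₀ : V₁) (w : V₂) :
    ecc (subVertexJoin G₁ G₂) (inr w) = 2 := by
  apply le_antisymm
  · apply Finset.sup_le
    intro y _
    rcases y with (y|y)|y
    · exact (ub_wu w y).trans (by omega)
    · exact le_of_eq (dist_wf w y)
    · exact ub_ww u₀ w y
  · obtain ⟨f, hf⟩ := exists_nonincident hr h2 u₀
    have h3 : (subVertexJoin G₁ G₂).dist (inr w) (inl (inr f)) ≤
        ecc (subVertexJoin G₁ G₂) (inr w) :=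
      Finset.le_sup (Finset.mem_univ _)
    rw [dist_wf w f] at h3
    exact h3

private lemma ecc_f_ge {r : ℕ} (hr : G₁.IsRegularOfDegree r) (h2 : 2 ≤ r) (w₀ : V₂)
    (f : G₁.edgeSet) : 3 ≤ ecc (subVertexJoin G₁ G₂) (inl (inr f)) := by
  obtain ⟨u, hu⟩ := exists_nonmem hr h2 f
  have h3 : (subVertexJoin G₁ G₂).dist (inl (inr f)) (inl (inl u)) ≤
      ecc (subVertexJoin G₁ G₂) (inl (inr f)) :=
    Finset.le_sup (Finset.mem_univ _)
  rw [SimpleGraph.dist_comm, dist_ue_not w₀ hu] at h3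
  exact h3

private lemma ecc_f_le (w₀ : V₂) (e : G₁.edgeSet) :
    ecc (subVertexJoin G₁ G₂) (inl (inr e)) ≤ 4 := by
  apply Finset.sup_le
  intro y _
  rcases y with (y|y)|y
  · exact (ub_eu w₀ e y).trans (by omega)
  · exact ub_ef w₀ e y
  · exact (ub_ew w₀ y e).trans (by omega)

private lemma ecc_f_eq4 (w₀ : V₂) {e f : G₁.edgeSet}
    (hd : ∀ v : V₁, ¬(v ∈ (e : Sym2 V₁) ∧ v ∈ (f : Sym2 V₁))) :
    ecc (subVertexJoin G₁ G₂) (inl (inr e)) = 4 := by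
  apply le_antisymm (ecc_f_le w₀ e)
  have h3 : (subVertexJoin G₁ G₂).dist (inl (inr e)) (inl (inr f)) ≤
      ecc (subVertexJoin G₁ G₂) (inl (inr e)) :=
    Finset.le_sup (Finset.mem_univ _)
  rw [dist_ef_disj w₀ hd] at h3
  exact h3

private lemma entry_uf {r : ℕ} (hr : G₁.IsRegularOfDegree r) (h2 : 2 ≤ r) (w₀ : V₂)
    (u : V₁) (f : G₁.edgeSet) :
    eccMatrix (subVertexJoin G₁ G₂) (inl (inl u)) (inl (inr f)) =
      3 - 3 * (if u ∈ (f : Sym2 V₁) then (1:ℝ) else 0) := by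
  simp only [eccMatrix]
  by_cases hm : u ∈ (f : Sym2 V₁)
  · rw [dist_ue (G₂ := G₂) hm, ecc_u hr h2 w₀, min_eq_left (ecc_f_ge hr h2 w₀ f),
      if_neg (by norm_num), if_pos hm]
    norm_num
  · rw [dist_ue_not w₀ hm, ecc_u hr h2 w₀, min_eq_left (ecc_f_ge hr h2 w₀ f),
      if_pos rfl, if_neg hm]
    norm_num

private lemma entry_wf {r : ℕ} (hr : G₁.IsRegularOfDegree r) (h2 : 2 ≤ r) (u₀ : V₁)
    (w : V₂) (f : G₁.edgeSet) :
    eccMatrix (subVertexJoin G₁ G₂) (inr w) (inl (inr f)) = 2 := by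
  simp only [eccMatrix]
  have hmin : min (ecc (subVertexJoin G₁ G₂) (inr w))
      (ecc (subVertexJoin G₁ G₂) (inl (inr f))) = 2 := by
    rw [ecc_w hr h2 u₀ w]
    exact min_eq_left (by have := ecc_f_ge (G₂ := G₂) hr h2 w (f := f); omega)
  rw [dist_wf w f, hmin, if_pos rfl]
  norm_num

private lemma entry_ef {r : ℕ} (hr : G₁.IsRegularOfDegree r) (h2 : 2 ≤ r) (w₀ : V₂)
    (e f : G₁.edgeSet) {a b : V₁} (hab : G₁.Adj a b) (he : (e : Sym2 V₁) = s(a, b)) :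
    eccMatrix (subVertexJoin G₁ G₂) (inl (inr e)) (inl (inr f)) =
      4 - 4 * (if a ∈ (f : Sym2 V₁) then (1:ℝ) else 0)
        - 4 * (if b ∈ (f : Sym2 V₁) then (1:ℝ) else 0)
        + 4 * (if f = e then (1:ℝ) else 0) := by
  have hae : a ∈ (e : Sym2 V₁) := by rw [he]; exact Sym2.mem_mk_left a b
  have hbe : b ∈ (e : Sym2 V₁) := by rw [he]; exact Sym2.mem_mk_right a b
  simp only [eccMatrix]
  by_cases hfe : f = e
  · subst hfe
    rw [SimpleGraph.dist_self, if_pos hae, if_pos hbe, if_pos rfl]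
    split_ifs <;> norm_num
  · by_cases hsh : ∃ v : V₁, v ∈ (e : Sym2 V₁) ∧ v ∈ (f : Sym2 V₁)
    · obtain ⟨v, hve, hvf⟩ := hsh
      have hd := dist_ef_share (G₂ := G₂) (fun h => hfe h.symm) hve hvf
      have hmin : 3 ≤ min (ecc (subVertexJoin G₁ G₂) (inl (inr e)))
          (ecc (subVertexJoin G₁ G₂) (inl (inr f))) :=
        le_min (ecc_f_ge hr h2 w₀ e) (ecc_f_ge hr h2 w₀ f)
      rw [hd, if_neg (by omega), if_neg hfe]
      have hnab : ¬(a ∈ (f : Sym2 V₁) ∧ b ∈ (f : Sym2 V₁)) := by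
        rintro ⟨hx, hy⟩
        exact hfe (Subtype.ext (((Sym2.mem_and_mem_iff hab.ne).mp ⟨hx, hy⟩).trans he.symm))
      have hvab : v = a ∨ v = b := by rw [he] at hve; exact Sym2.mem_iff.mp hve
      have hor : a ∈ (f : Sym2 V₁) ∨ b ∈ (f : Sym2 V₁) := by
        rcases hvab with h | h
        · exact Or.inl (h ▸ hvf)
        · exact Or.inr (h ▸ hvf)
      rcases hor with h | h
      · have hnb : b ∉ (f : Sym2 V₁) := fun hb => hnab ⟨h, hb⟩
        rw [if_pos h, if_neg hnb]; norm_num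
      · by_cases ha' : a ∈ (f : Sym2 V₁)
        · exact absurd ⟨ha', h⟩ hnab
        · rw [if_neg ha', if_pos h]; norm_num
    · have hd : ∀ v : V₁, ¬(v ∈ (e : Sym2 V₁) ∧ v ∈ (f : Sym2 V₁)) :=
        fun v hv => hsh ⟨v, hv⟩
      have hd' : ∀ v : V₁, ¬(v ∈ (f : Sym2 V₁) ∧ v ∈ (e : Sym2 V₁)) :=
        fun v hv => hd v ⟨hv.2, hv.1⟩
      have hna : a ∉ (f : Sym2 V₁) := fun h => hd a ⟨hae, h⟩
      have hnb : b ∉ (f : Sym2 V₁) := fun h => hd b ⟨hbe, h⟩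
      rw [dist_ef_disj w₀ hd, ecc_f_eq4 w₀ hd, ecc_f_eq4 w₀ hd',
        if_pos (by simp), if_neg hna, if_neg hnb, if_neg hfe]
      norm_num
end AuxStmt7

/-- For `r₁`-regular `G₁` (`r₁ ≥ 2`, `p₁` vertices, `q₁` edges) and
`r₂`-regular `G₂`, `4` is an eigenvalue of `ε(G₁ ∨̇ G₂)` with multiplicity at least
`q₁ - p₁`. -/
theorem stmt7 {V₁ V₂ : Type*} [Fintype V₁] [Fintype V₂]
    (G₁ : SimpleGraph V₁) (G₂ : SimpleGraph V₂) (r₁ r₂ : ℕ)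
    (h₁ : G₁.Connected) (h₂ : G₂.Connected)
    (hr₁ : G₁.IsRegularOfDegree r₁) (hr₁2 : 2 ≤ r₁)
    (hr₂ : G₂.IsRegularOfDegree r₂) :
    Fintype.card G₁.edgeSet - Fintype.card V₁ ≤
      Module.finrank ℝ (eigSpace (eccMatrix (subVertexJoin G₁ G₂)) 4) := by
  classical
  obtain ⟨w₀⟩ := h₂.nonempty
  set R : Matrix V₁ G₁.edgeSet ℝ := incMat G₁ with hR
  set K : Submodule ℝ (G₁.edgeSet → ℝ) := LinearMap.ker R.mulVecLin with hK
  let L : (G₁.edgeSet → ℝ) →ₗ[ℝ] (((V₁ ⊕ G₁.edgeSet) ⊕ V₂) → ℝ) :=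
    { toFun := fun Z => Sum.elim (Sum.elim (fun _ => 0) Z) (fun _ => 0)
      map_add' := by intro Z W; funext x; rcases x with (x|x)|x <;> simp
      map_smul' := by intro c Z; funext x; rcases x with (x|x)|x <;> simp }
  have hinj : Function.Injective L := by
    intro Z W h
    funext f
    simpa [L] using congrFun h (Sum.inl (Sum.inr f))
  -- the kernel of R maps into the 4-eigenspace
  have hmap : Submodule.map L K ≤ eigSpace (eccMatrix (subVertexJoin G₁ G₂)) 4 := by
    rintro x ⟨Z, hZ, rfl⟩
    have hrow : ∀ v : V₁, ∑ f : G₁.edgeSet,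
        (if v ∈ (f : Sym2 V₁) then (1:ℝ) else 0) * Z f = 0 := by
      intro v
      have := congrFun (LinearMap.mem_ker.mp hZ) v
      simpa [hR, Matrix.mulVec, dotProduct, incMat] using this
    have hsum : ∑ f : G₁.edgeSet, Z f = 0 := by
      have hswap : ∑ v : V₁, ∑ f : G₁.edgeSet,
          (if v ∈ (f : Sym2 V₁) then (1:ℝ) else 0) * Z f
          = ∑ f : G₁.edgeSet, (∑ v : V₁,
            (if v ∈ (f : Sym2 V₁) then (1:ℝ) else 0)) * Z f := by
        rw [Finset.sum_comm]
        exact Finset.sum_congr rfl fun f _ => (Finset.sum_mul _ _ _).symm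
      have hcard : ∀ f : G₁.edgeSet,
          ∑ v : V₁, (if v ∈ (f : Sym2 V₁) then (1:ℝ) else 0) = 2 := by
        intro f
        obtain ⟨a, b, hab, hf⟩ := edge_rep f
        have : ∀ v : V₁, (if v ∈ (f : Sym2 V₁) then (1:ℝ) else 0) =
            (if v = a then (1:ℝ) else 0) + (if v = b then (1:ℝ) else 0) := by
          intro v
          rw [hf]
          rcases eq_or_ne v a with h | h <;> rcases eq_or_ne v b with h' | h'
          · exact absurd (h.symm.trans h') hab.ne
          all_goals simp [h, h', Sym2.mem_iff, hab.ne, hab.ne']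
        rw [Finset.sum_congr rfl fun v _ => this v, Finset.sum_add_distrib]
        simp [Finset.sum_ite_eq']
        norm_num
      have h0 : ∑ v : V₁, ∑ f : G₁.edgeSet,
          (if v ∈ (f : Sym2 V₁) then (1:ℝ) else 0) * Z f = 0 :=
        Finset.sum_eq_zero fun v _ => hrow v
      rw [hswap] at h0
      have h2 : ∑ f : G₁.edgeSet, (2:ℝ) * Z f = 0 := by
        rw [← h0]; exact Finset.sum_congr rfl fun f _ => by rw [hcard f]
      rw [← Finset.mul_sum] at h2
      linarith
    have hmv : (eccMatrix (subVertexJoin G₁ G₂)).mulVec (L Z) =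
        (4:ℝ) • (L Z) := by
      funext y
      have hexp : (eccMatrix (subVertexJoin G₁ G₂)).mulVec (L Z) y =
          ∑ f : G₁.edgeSet,
            eccMatrix (subVertexJoin G₁ G₂) y (Sum.inl (Sum.inr f)) * Z f := by
        simp [Matrix.mulVec, dotProduct, Fintype.sum_sum_type, L]
      rw [hexp]
      rcases y with (v|e)|w
      · have hcalc : ∀ f : G₁.edgeSet,
            eccMatrix (subVertexJoin G₁ G₂) (Sum.inl (Sum.inl v)) (Sum.inl (Sum.inr f)) * Z f
            = 3 * Z f - 3 * ((if v ∈ (f : Sym2 V₁) then (1:ℝ) else 0) * Z f) := by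
          intro f
          rw [entry_uf hr₁ hr₁2 w₀ v f]; ring
        rw [Finset.sum_congr rfl fun f _ => hcalc f, Finset.sum_sub_distrib,
          ← Finset.mul_sum, ← Finset.mul_sum, hsum, hrow v]
        simp [L]
      · obtain ⟨a, b, hab, he⟩ := edge_rep e
        have hcalc : ∀ f : G₁.edgeSet,
            eccMatrix (subVertexJoin G₁ G₂) (Sum.inl (Sum.inr e)) (Sum.inl (Sum.inr f)) * Z f
            = 4 * Z f - 4 * ((if a ∈ (f : Sym2 V₁) then (1:ℝ) else 0) * Z f)
              - 4 * ((if b ∈ (f : Sym2 V₁) then (1:ℝ) else 0) * Z f)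
              + 4 * (if f = e then Z f else 0) := by
          intro f
          rw [entry_ef hr₁ hr₁2 w₀ e f hab he]
          split_ifs <;> ring
        rw [Finset.sum_congr rfl fun f _ => hcalc f, Finset.sum_add_distrib,
          Finset.sum_sub_distrib, Finset.sum_sub_distrib,
          ← Finset.mul_sum, ← Finset.mul_sum, ← Finset.mul_sum, ← Finset.mul_sum,
          hsum, hrow a, hrow b, Finset.sum_ite_eq']
        simp [L]
      · have hcalc : ∀ f : G₁.edgeSet,
            eccMatrix (subVertexJoin G₁ G₂) (Sum.inr w) (Sum.inl (Sum.inr f)) * Z f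
            = 2 * Z f := by
          intro f
          rw [entry_wf hr₁ hr₁2 (h₁.nonempty.some) w f]
        rw [Finset.sum_congr rfl fun f _ => hcalc f, ← Finset.mul_sum, hsum]
        simp [L]
    rw [eigSpace, LinearMap.mem_ker, LinearMap.sub_apply, Matrix.mulVecLin_apply,
      LinearMap.smul_apply, LinearMap.id_apply, hmv, sub_self]
  -- dimension count
  have hker : Fintype.card G₁.edgeSet - Fintype.card V₁ ≤ Module.finrank ℝ K := by
    have hru := LinearMap.finrank_range_add_finrank_ker R.mulVecLin
    rw [Module.finrank_fintype_fun_eq_card] at hru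
    have hle : Module.finrank ℝ (LinearMap.range R.mulVecLin) ≤ Fintype.card V₁ := by
      have := Submodule.finrank_le (LinearMap.range R.mulVecLin)
      rwa [Module.finrank_fintype_fun_eq_card] at this
    rw [hK]
    omega
  have heq : Module.finrank ℝ K = Module.finrank ℝ (Submodule.map L K) :=
    (Submodule.equivMapOfInjective L hinj K).finrank_eq
  calc Fintype.card G₁.edgeSet - Fintype.card V₁ ≤ Module.finrank ℝ K := hker
    _ = Module.finrank ℝ (Submodule.map L K) := heq
    _ ≤ Module.finrank ℝ (eigSpace (eccMatrix (subVertexJoin G₁ G₂)) 4) :=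
        Submodule.finrank_mono hmap
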